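/- Let H = ℍ[ℚ; −1, −7] and let O be the ℤ-submodule of H spanned by 1, i, (i + j)/2, (1 + ij)/2 (this is a subring of H), and set u = ij ∈ O, so nrm(u) = 7. Let 𝒲 be the subgroup of invertible 2×2 matrices over H generated by the Cohn matrices W(α), α ∈ O. Then for every γ ∈ 𝒲 with entries γ = [[a, b], [c, d]]: (i) c·u·conj(d) − d·u·conj(c) is scalar and lies in 7ℤ; (ii) a·u·conj(b) − b·u·conj(a) is scalar and lies in 7ℤ; (iii) a·u·conj(d) − b·u·conj(c) − u ∈ 7·O. -/

import Mathlib

open Quaternion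
open scoped Quaternion

/-- The Cohn matrix `W(α) = [[α, 1], [−1, 0]]` as an invertible 2×2 matrix over a ring,
with inverse `[[0, −1], [1, α]]`. -/
def CohnUnit {A : Type*} [Ring A] (α : A) : (Matrix (Fin 2) (Fin 2) A)ˣ where
  val := !![α, 1; -1, 0]
  inv := !![0, -1; 1, α]
  val_inv := by
    ext i j
    fin_cases i <;> fin_cases j <;>
      simp [Matrix.mul_apply, Fin.sum_univ_succ, Matrix.one_apply]
  inv_val := by
    ext i j
    fin_cases i <;> fin_cases j <;>
      simp [Matrix.mul_apply, Fin.sum_univ_succ, Matrix.one_apply]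

/-- The maximal order `ℤ ⊕ ℤi ⊕ ℤ(i+j)/2 ⊕ ℤ(1+ij)/2` of `ℍ[ℚ; −1, −7]`. -/
noncomputable def order : Submodule ℤ ℍ[ℚ, -1, -7] :=
  Submodule.span ℤ
    ({1, ⟨0, 1, 0, 0⟩, ⟨0, 1 / 2, 1 / 2, 0⟩, ⟨1 / 2, 0, 0, 1 / 2⟩} :
      Set ℍ[ℚ, -1, -7])

/-- `𝒲`: the subgroup of invertible 2×2 matrices over `ℍ[ℚ; −1, −7]` generated by the
Cohn matrices `W(α)`, `α ∈ O`. -/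
noncomputable def CohnSubgroup : Subgroup (Matrix (Fin 2) (Fin 2) ℍ[ℚ, -1, -7])ˣ :=
  Subgroup.closure {γ | ∃ α ∈ order, γ = CohnUnit α}

/-! ### Auxiliary material -/

abbrev Hq : Type := ℍ[ℚ, -1, -7]

/-- Generic element of the order, with integer coordinates. -/
def el (a b c d : ℤ) : Hq := ⟨a + d / 2, b + c / 2, c / 2, d / 2⟩

/-- The distinguished element `u = ij`. -/
def qU : Hq := ⟨0, 0, 0, 1⟩

lemma mem_order_iff {x : Hq} : x ∈ order ↔ ∃ a b c d : ℤ, x = el a b c d := by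
  constructor
  · intro hx
    induction hx using Submodule.span_induction with
    | mem x h =>
      rcases h with h | h | h | h
      · exact ⟨1, 0, 0, 0, by ext <;> simp [el, h]⟩
      · exact ⟨0, 1, 0, 0, by ext <;> simp [el, h]⟩
      · exact ⟨0, 0, 1, 0, by ext <;> simp [el, h]⟩
      · exact ⟨0, 0, 0, 1, by ext <;> simp [el, Set.mem_singleton_iff.mp h]⟩
    | zero => exact ⟨0, 0, 0, 0, by ext <;> simp [el]⟩
    | add x y hx hy ihx ihy =>
      obtain ⟨a, b, c, d, rfl⟩ := ihx
      obtain ⟨a', b', c', d', rfl⟩ := ihy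
      exact ⟨a + a', b + b', c + c', d + d', by ext <;> simp [el] <;> push_cast <;> ring⟩
    | smul n x hx ihx =>
      obtain ⟨a, b, c, d, rfl⟩ := ihx
      exact ⟨n * a, n * b, n * c, n * d, by
        ext <;> simp [el, zsmul_eq_mul] <;> push_cast <;> ring⟩
  · rintro ⟨a, b, c, d, rfl⟩
    have h : el a b c d = a • (1 : Hq) + b • (⟨0,1,0,0⟩ : Hq) + c • (⟨0,1/2,1/2,0⟩ : Hq)
        + d • (⟨1/2,0,0,1/2⟩ : Hq) := by
      ext <;> simp [el, zsmul_eq_mul] <;> push_cast <;> ring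
    rw [h]
    refine Submodule.add_mem _ (Submodule.add_mem _ (Submodule.add_mem _ ?_ ?_) ?_) ?_ <;>
      exact Submodule.smul_mem _ _ (Submodule.subset_span (by simp))

lemma el_mul (pa pb pc pd qa qb qc qd : ℤ) :
    el pa pb pc pd * el qa qb qc qd =
      el (pa*qa - pb*qb - pb*qc - 2*pc*qc - 2*pd*qd)
         (pa*qb + pb*qa + pb*qd + 2*pc*qd - 2*pd*qc)
         (pa*qc - pb*qd + pc*qa + pd*qb + pd*qc)
         (pa*qd + pb*qc - pc*qb + pd*qa + pd*qd) := by
  ext <;> simp [el] <;> push_cast <;> ring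

lemma el_star (a b c d : ℤ) : star (el a b c d) = el (a + d) (-b) (-c) (-d) := by
  ext <;> simp [el] <;> push_cast <;> ring

lemma el_intCast (n : ℤ) : ((n : ℤ) : Hq) = el n 0 0 0 := by
  ext <;> simp [el]

lemma el_trace (a b c d : ℤ) : el a b c d + star (el a b c d) = ((2*a + d : ℤ) : Hq) := by
  rw [el_intCast]; ext <;> simp [el] <;> push_cast <;> ring

lemma el_norm (a b c d : ℤ) :
    el a b c d * star (el a b c d)
      = ((a*a + a*d + b*b + b*c + 2*c*c + 2*d*d : ℤ) : Hq) := by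
  rw [el_intCast]; ext <;> simp [el] <;> push_cast <;> ring

lemma el_cross (ra rb rc rd sa sb sc sd : ℤ) :
    el ra rb rc rd * qU * star (el sa sb sc sd)
        + star (el ra rb rc rd * qU * star (el sa sb sc sd))
      = ((7 * (ra*sd - rb*sc + rc*sb - rd*sa) : ℤ) : Hq) := by
  rw [el_intCast]; ext <;> simp [el, qU] <;> push_cast <;> ring

lemma el_comm (a b c d : ℤ) :
    el a b c d * qU - qU * star (el a b c d) = ((7 * (-d) : ℤ) : Hq) := by
  rw [el_intCast]; ext <;> simp [el, qU] <;> push_cast <;> ring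

lemma el_comm' (a b c d : ℤ) :
    qU * star (el a b c d) - el a b c d * qU = ((7 * d : ℤ) : Hq) := by
  rw [el_intCast]; ext <;> simp [el, qU] <;> push_cast <;> ring

lemma mul_mem_order {x y : Hq} (hx : x ∈ order) (hy : y ∈ order) : x * y ∈ order := by
  obtain ⟨a, b, c, d, rfl⟩ := mem_order_iff.mp hx
  obtain ⟨a', b', c', d', rfl⟩ := mem_order_iff.mp hy
  rw [el_mul]; exact mem_order_iff.mpr ⟨_, _, _, _, rfl⟩

lemma star_mem_order {x : Hq} (hx : x ∈ order) : star x ∈ order := by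
  obtain ⟨a, b, c, d, rfl⟩ := mem_order_iff.mp hx
  rw [el_star]; exact mem_order_iff.mpr ⟨_, _, _, _, rfl⟩

lemma intCast_mem_order (n : ℤ) : ((n : ℤ) : Hq) ∈ order := by
  rw [el_intCast]; exact mem_order_iff.mpr ⟨_, _, _, _, rfl⟩

lemma one_mem_order : (1 : Hq) ∈ order := by
  simpa using intCast_mem_order 1

lemma neg_one_mem_order : (-1 : Hq) ∈ order := by
  simpa using intCast_mem_order (-1)

lemma trace_order {x : Hq} (hx : x ∈ order) : ∃ n : ℤ, x + star x = ((n : ℤ) : Hq) := by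
  obtain ⟨a, b, c, d, rfl⟩ := mem_order_iff.mp hx
  exact ⟨2*a + d, el_trace a b c d⟩

lemma norm_order {x : Hq} (hx : x ∈ order) : ∃ n : ℤ, x * star x = ((n : ℤ) : Hq) := by
  obtain ⟨a, b, c, d, rfl⟩ := mem_order_iff.mp hx
  exact ⟨_, el_norm a b c d⟩

lemma cross_order {x y : Hq} (hx : x ∈ order) (hy : y ∈ order) :
    ∃ t : ℤ, x * qU * star y + star (x * qU * star y) = ((7 * t : ℤ) : Hq) := by
  obtain ⟨a, b, c, d, rfl⟩ := mem_order_iff.mp hx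
  obtain ⟨a', b', c', d', rfl⟩ := mem_order_iff.mp hy
  exact ⟨_, el_cross a b c d a' b' c' d'⟩

@[simp] lemma qU_re : qU.re = 0 := rfl
@[simp] lemma qU_imI : qU.imI = 0 := rfl
@[simp] lemma qU_imJ : qU.imJ = 0 := rfl
@[simp] lemma qU_imK : qU.imK = 1 := rfl

set_option maxHeartbeats 2000000 in
lemma pure_expand (p q r s a b c d : Hq) :
    (p*a + q*c) * qU * star (r*b + s*d) - (p*b + q*d) * qU * star (r*a + s*c)
      = p*(a*qU*star b - b*qU*star a)*star r + q*(c*qU*star d - d*qU*star c)*star s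
        + p*(a*qU*star d - b*qU*star c)*star s + q*(c*qU*star b - d*qU*star a)*star r := by
  ext <;> simp only [QuaternionAlgebra.re_mul, QuaternionAlgebra.imI_mul, QuaternionAlgebra.imJ_mul, QuaternionAlgebra.imK_mul, QuaternionAlgebra.re_add, QuaternionAlgebra.imI_add, QuaternionAlgebra.imJ_add, QuaternionAlgebra.imK_add, QuaternionAlgebra.re_sub, QuaternionAlgebra.imI_sub, QuaternionAlgebra.imJ_sub, QuaternionAlgebra.imK_sub, QuaternionAlgebra.re_neg, QuaternionAlgebra.imI_neg, QuaternionAlgebra.imJ_neg, QuaternionAlgebra.imK_neg, QuaternionAlgebra.re_star, QuaternionAlgebra.imI_star, QuaternionAlgebra.imJ_star, QuaternionAlgebra.imK_star, QuaternionAlgebra.re_intCast, QuaternionAlgebra.imI_intCast, QuaternionAlgebra.imJ_intCast, QuaternionAlgebra.imK_intCast, qU_re, qU_imI, qU_imJ, qU_imK] <;> ring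

lemma star_qU : star qU = -qU := by ext <;> simp [qU]

lemma starAU (a b c d : Hq) :
    c*qU*star b - d*qU*star a = star (a*qU*star d - b*qU*star c) := by
  ext <;> simp only [QuaternionAlgebra.re_mul, QuaternionAlgebra.imI_mul, QuaternionAlgebra.imJ_mul, QuaternionAlgebra.imK_mul, QuaternionAlgebra.re_add, QuaternionAlgebra.imI_add, QuaternionAlgebra.imJ_add, QuaternionAlgebra.imK_add, QuaternionAlgebra.re_sub, QuaternionAlgebra.imI_sub, QuaternionAlgebra.imJ_sub, QuaternionAlgebra.imK_sub, QuaternionAlgebra.re_neg, QuaternionAlgebra.imI_neg, QuaternionAlgebra.imJ_neg, QuaternionAlgebra.imK_neg, QuaternionAlgebra.re_star, QuaternionAlgebra.imI_star, QuaternionAlgebra.imJ_star, QuaternionAlgebra.imK_star, QuaternionAlgebra.re_intCast, QuaternionAlgebra.imI_intCast, QuaternionAlgebra.imJ_intCast, QuaternionAlgebra.imK_intCast, qU_re, qU_imI, qU_imJ, qU_imK] <;> ring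

lemma seven_cast : (7 : Hq) = ((7 : ℤ) : Hq) := by norm_cast

/-- The key invariant, for a matrix `[[a,b],[c,d]]`. -/
def SP (a b c d : Hq) : Prop :=
  (∃ m : ℤ, c * qU * star d - d * qU * star c = ((7 * m : ℤ) : Hq)) ∧
  (∃ m : ℤ, a * qU * star b - b * qU * star a = ((7 * m : ℤ) : Hq)) ∧
  (∃ o ∈ order, a * qU * star d - b * qU * star c - qU = (7 : Hq) * o)

set_option maxHeartbeats 2000000 in
lemma pure_collect (r s o : Hq) (K1 K2 K3 : ℤ) :
    r*((K1 : ℤ) : Hq)*star r + s*((K2 : ℤ) : Hq)*star s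
      + r*(((K3:ℤ):Hq)*o + qU)*star s + s*(star o * ((K3:ℤ):Hq) + -qU)*star r
    = ((K1 : ℤ) : Hq)*(r*star r) + ((K2 : ℤ) : Hq)*(s*star s)
      + (r*qU*star s + star (r*qU*star s)) + ((K3:ℤ):Hq)*(r*o*star s + star (r*o*star s)) := by
  ext <;> simp only [QuaternionAlgebra.re_mul, QuaternionAlgebra.imI_mul, QuaternionAlgebra.imJ_mul, QuaternionAlgebra.imK_mul, QuaternionAlgebra.re_add, QuaternionAlgebra.imI_add, QuaternionAlgebra.imJ_add, QuaternionAlgebra.imK_add, QuaternionAlgebra.re_sub, QuaternionAlgebra.imI_sub, QuaternionAlgebra.imJ_sub, QuaternionAlgebra.imK_sub, QuaternionAlgebra.re_neg, QuaternionAlgebra.imI_neg, QuaternionAlgebra.imJ_neg, QuaternionAlgebra.imK_neg, QuaternionAlgebra.re_star, QuaternionAlgebra.imI_star, QuaternionAlgebra.imJ_star, QuaternionAlgebra.imK_star, QuaternionAlgebra.re_intCast, QuaternionAlgebra.imI_intCast, QuaternionAlgebra.imJ_intCast, QuaternionAlgebra.imK_intCast, qU_re, qU_imI, qU_imJ, qU_imK]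 <;> ring

set_option maxHeartbeats 2000000 in
lemma pure_collect' (p q r s o : Hq) (K1 K2 K3 mB mC : ℤ) (h1 : K1 = K3 * mB)
    (h2 : K2 = K3 * mC) :
    p*((K1 : ℤ) : Hq)*star r + q*((K2 : ℤ) : Hq)*star s
      + p*(((K3:ℤ):Hq)*o + qU)*star s + q*(star o * ((K3:ℤ):Hq) + -qU)*star r - qU
    = (p*qU*star s - q*qU*star r - qU)
      + ((K3:ℤ):Hq)*(((mB : ℤ) : Hq)*(p*star r) + ((mC : ℤ) : Hq)*(q*star s)
          + p*o*star s + q*(star o)*star r) := by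
  subst h1 h2
  ext <;> simp only [QuaternionAlgebra.re_mul, QuaternionAlgebra.imI_mul, QuaternionAlgebra.imJ_mul, QuaternionAlgebra.imK_mul, QuaternionAlgebra.re_add, QuaternionAlgebra.imI_add, QuaternionAlgebra.imJ_add, QuaternionAlgebra.imK_add, QuaternionAlgebra.re_sub, QuaternionAlgebra.imI_sub, QuaternionAlgebra.imJ_sub, QuaternionAlgebra.imK_sub, QuaternionAlgebra.re_neg, QuaternionAlgebra.imI_neg, QuaternionAlgebra.imJ_neg, QuaternionAlgebra.imK_neg, QuaternionAlgebra.re_star, QuaternionAlgebra.imI_star, QuaternionAlgebra.imJ_star, QuaternionAlgebra.imK_star, QuaternionAlgebra.re_intCast, QuaternionAlgebra.imI_intCast, QuaternionAlgebra.imJ_intCast, QuaternionAlgebra.imK_intCast, qU_re, qU_imI, qU_imJ, qU_imK] <;> push_cast <;> ring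

lemma SP_mul {p q r s a b c d : Hq}
    (hp : p ∈ order) (hq : q ∈ order) (hr : r ∈ order) (hs : s ∈ order)
    (hx : SP p q r s) (hy : SP a b c d) :
    SP (p*a + q*c) (p*b + q*d) (r*a + s*c) (r*b + s*d) := by
  obtain ⟨⟨mC, hC⟩, ⟨mB, hB⟩, ⟨o, ho, hA0⟩⟩ := hy
  rw [seven_cast] at hA0
  have hA2 : a*qU*star d - b*qU*star c = ((7:ℤ):Hq)*o + qU := sub_eq_iff_eq_add.mp hA0
  have hA2' : c*qU*star b - d*qU*star a = star o * ((7:ℤ):Hq) + -qU := by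
    rw [starAU, hA2, star_add, star_mul, star_qU, star_intCast]
  refine ⟨?_, ?_, ?_⟩
  · -- entry (1,0) vs (1,1)
    obtain ⟨Nr, hNr⟩ := norm_order hr
    obtain ⟨Ns, hNs⟩ := norm_order hs
    obtain ⟨t, ht⟩ := cross_order hr hs
    obtain ⟨n, hn⟩ := trace_order (mul_mem_order (mul_mem_order hr ho) (star_mem_order hs))
    refine ⟨mB*Nr + mC*Ns + t + n, ?_⟩
    rw [pure_expand r s r s a b c d, hB, hC, hA2, hA2', pure_collect, hNr, hNs, ht, hn]
    have hz : (7*mB)*Nr + (7*mC)*Ns + 7*t + 7*n = 7*(mB*Nr + mC*Ns + t + n) := by ring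
    exact_mod_cast congrArg (fun z : ℤ => (z : Hq)) hz
  · -- entry (0,0) vs (0,1)
    obtain ⟨Np, hNp⟩ := norm_order hp
    obtain ⟨Nq, hNq⟩ := norm_order hq
    obtain ⟨t, ht⟩ := cross_order hp hq
    obtain ⟨n, hn⟩ := trace_order (mul_mem_order (mul_mem_order hp ho) (star_mem_order hq))
    refine ⟨mB*Np + mC*Nq + t + n, ?_⟩
    rw [pure_expand p q p q a b c d, hB, hC, hA2, hA2', pure_collect, hNp, hNq, ht, hn]
    have hz : (7*mB)*Np + (7*mC)*Nq + 7*t + 7*n = 7*(mB*Np + mC*Nq + t + n) := by ring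
    exact_mod_cast congrArg (fun z : ℤ => (z : Hq)) hz
  · -- entry (0,0) vs (1,1)
    obtain ⟨oX, hoX, hX0⟩ := hx.2.2
    rw [seven_cast] at hX0
    refine ⟨oX + (((mB : ℤ) : Hq)*(p*star r) + ((mC : ℤ) : Hq)*(q*star s)
        + p*o*star s + q*(star o)*star r), ?_, ?_⟩
    · refine Submodule.add_mem _ hoX (Submodule.add_mem _ (Submodule.add_mem _
        (Submodule.add_mem _ ?_ ?_) ?_) ?_)
      · exact mul_mem_order (intCast_mem_order mB) (mul_mem_order hp (star_mem_order hr))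
      · exact mul_mem_order (intCast_mem_order mC) (mul_mem_order hq (star_mem_order hs))
      · exact mul_mem_order (mul_mem_order hp ho) (star_mem_order hs)
      · exact mul_mem_order (mul_mem_order hq (star_mem_order ho)) (star_mem_order hr)
    · rw [seven_cast, pure_expand p q r s a b c d, hB, hC, hA2, hA2',
        pure_collect' p q r s o (7*mB) (7*mC) 7 mB mC (by ring) (by ring), hX0, ← mul_add]

/-- The invariant carried through the induction on the subgroup. -/
def GoodMat (M : Matrix (Fin 2) (Fin 2) Hq) : Prop :=
  (∀ i j, M i j ∈ order) ∧ SP (M 0 0) (M 0 1) (M 1 0) (M 1 1)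

def Pinv (γ : (Matrix (Fin 2) (Fin 2) Hq)ˣ) : Prop :=
  GoodMat γ.val ∧ GoodMat (γ⁻¹).val

lemma GoodMat_mul {M N : Matrix (Fin 2) (Fin 2) Hq} (hM : GoodMat M) (hN : GoodMat N) :
    GoodMat (M * N) := by
  obtain ⟨hMm, hMs⟩ := hM
  obtain ⟨hNm, hNs⟩ := hN
  constructor
  · intro i j
    rw [Matrix.mul_apply, Fin.sum_univ_two]
    exact Submodule.add_mem _ (mul_mem_order (hMm i 0) (hNm 0 j))
      (mul_mem_order (hMm i 1) (hNm 1 j))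
  · have h := SP_mul (hMm 0 0) (hMm 0 1) (hMm 1 0) (hMm 1 1) hMs hNs
    simpa [Matrix.mul_apply, Fin.sum_univ_two] using h

lemma SP_one : SP (1 : Hq) 0 0 1 := by
  refine ⟨⟨0, by simp⟩, ⟨0, by simp⟩, ⟨0, Submodule.zero_mem _, by simp⟩⟩

lemma GoodMat_one : GoodMat (1 : Matrix (Fin 2) (Fin 2) Hq) := by
  constructor
  · intro i j
    fin_cases i <;> fin_cases j <;>
      simp [Matrix.one_apply, one_mem_order, Submodule.zero_mem]
  · simpa [Matrix.one_apply] using SP_one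

lemma Pinv_one : Pinv 1 := by
  constructor
  · rw [Units.val_one]
    exact GoodMat_one
  · rw [inv_one, Units.val_one]
    exact GoodMat_one

lemma Pinv_mul {x y : (Matrix (Fin 2) (Fin 2) Hq)ˣ} (hx : Pinv x) (hy : Pinv y) :
    Pinv (x * y) := by
  refine ⟨?_, ?_⟩
  · rw [Units.val_mul]
    exact GoodMat_mul hx.1 hy.1
  · rw [mul_inv_rev, Units.val_mul]
    exact GoodMat_mul hy.2 hx.2

lemma Pinv_inv {x : (Matrix (Fin 2) (Fin 2) Hq)ˣ} (hx : Pinv x) : Pinv x⁻¹ := by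
  refine ⟨hx.2, ?_⟩
  rw [inv_inv]
  exact hx.1

lemma GoodMat_gen_val {α : Hq} (hα : α ∈ order) : GoodMat (CohnUnit α).val := by
  obtain ⟨a, b, c, d, rfl⟩ := mem_order_iff.mp hα
  constructor
  · intro i j
    fin_cases i <;> fin_cases j <;>
      simp [CohnUnit, one_mem_order, neg_one_mem_order, Submodule.zero_mem,
        mem_order_iff.mpr ⟨a, b, c, d, rfl⟩]
  · refine ⟨⟨0, ?_⟩, ⟨-d, ?_⟩, ⟨0, Submodule.zero_mem _, ?_⟩⟩
    · simp [CohnUnit]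
    · have h := el_comm a b c d
      simpa [CohnUnit] using h
    · simp [CohnUnit]

lemma GoodMat_gen_inv {α : Hq} (hα : α ∈ order) : GoodMat ((CohnUnit α)⁻¹).val := by
  obtain ⟨a, b, c, d, rfl⟩ := mem_order_iff.mp hα
  constructor
  · intro i j
    fin_cases i <;> fin_cases j <;>
      simp [CohnUnit, one_mem_order, neg_one_mem_order, Submodule.zero_mem,
        mem_order_iff.mpr ⟨a, b, c, d, rfl⟩]
  · refine ⟨⟨d, ?_⟩, ⟨0, ?_⟩, ⟨0, Submodule.zero_mem _, ?_⟩⟩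
    · have h := el_comm' a b c d
      simpa [CohnUnit] using h
    · simp [CohnUnit]
    · simp [CohnUnit]

/-- For `γ = [[a,b],[c,d]] ∈ 𝒲` and `u = ij` (of norm 7):
(i) `c·u·conj d − d·u·conj c` is a scalar in `7ℤ`;
(ii) `a·u·conj b − b·u·conj a` is a scalar in `7ℤ`;
(iii) `a·u·conj d − b·u·conj c − u ∈ 7·O`. -/
theorem cohn_congruence_neg1_neg7
    (γ : (Matrix (Fin 2) (Fin 2) ℍ[ℚ, -1, -7])ˣ) (hγ : γ ∈ CohnSubgroup)
    (u : ℍ[ℚ, -1, -7]) (hu : u = ⟨0, 0, 0, 1⟩)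
    (a b c d : ℍ[ℚ, -1, -7]) (ha : a = γ.1 0 0) (hb : b = γ.1 0 1)
    (hc : c = γ.1 1 0) (hd : d = γ.1 1 1) :
    (∃ m : ℤ, c * u * star d - d * u * star c = ((7 * m : ℤ) : ℍ[ℚ, -1, -7])) ∧
    (∃ m : ℤ, a * u * star b - b * u * star a = ((7 * m : ℤ) : ℍ[ℚ, -1, -7])) ∧
    (∃ o ∈ order, a * u * star d - b * u * star c - u = (7 : ℍ[ℚ, -1, -7]) * o) := by
  have hu' : u = qU := hu
  subst hu' ha hb hc hd
  unfold CohnSubgroup at hγ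
  have hP : Pinv γ := by
    induction hγ using Subgroup.closure_induction with
    | mem x hx =>
      obtain ⟨α, hα, rfl⟩ := hx
      exact ⟨GoodMat_gen_val hα, GoodMat_gen_inv hα⟩
    | one => exact Pinv_one
    | mul x y hx hy ihx ihy => exact Pinv_mul ihx ihy
    | inv x hx ih => exact Pinv_inv ih
  exact hP.1.2
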